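/- Let X ⊂ ℝⁿ be a regular convex set, f a projectively self-concordant barrier on X, p ∈ ℝⁿ, and suppose x* ∈ int X is a critical point of q_p(x) = f(x) + log(1 + ⟨x, p⟩) (with 1 + ⟨x, p⟩ > 0 on int X). Then the Hessian of q_p at x* is positive definite, and at x = x* the identities f'(x) = −p/(1 + ⟨x,p⟩), p = −f'(x)/(1 + ⟨f'(x), x⟩), and 1 + ⟨f'(x), x⟩ = 1/(1 + ⟨x, p⟩) > 0 hold. -/

import Mathlib

open Filter

variable {E : Type*} [NormedAddCommGroup E] [NormedSpace ℝ E]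

/-- A regular convex set: closed, convex, with nonempty interior, containing no lines. -/
def IsRegularConvex (X : Set E) : Prop :=
  IsClosed X ∧ Convex ℝ X ∧ (interior X).Nonempty ∧
    ∀ x d : E, d ≠ 0 → ¬ (∀ t : ℝ, x + t • d ∈ X)

/-- Affine metric `G(x)[h,h] = f''(x)[h,h] - (f'(x)[h])²`. -/
noncomputable def affMetric (f : E → ℝ) (x h : E) : ℝ :=
  iteratedFDeriv ℝ 2 f x (fun _ => h) - (fderiv ℝ f x h)^2

/-- Cubic form `C(x)[h,h,h]`. -/
noncomputable def cubicForm (f : E → ℝ) (x h : E) : ℝ :=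
  iteratedFDeriv ℝ 3 f x (fun _ => h)
    - 6 * iteratedFDeriv ℝ 2 f x (fun _ => h) * fderiv ℝ f x h
    + 4 * (fderiv ℝ f x h)^3

/-- Projectively self-concordant barrier with parameter γ on X. -/
def IsPSCBarrier (X : Set E) (f : E → ℝ) (γ : ℝ) : Prop :=
  ContDiffOn ℝ 3 f (interior X) ∧
  (∀ x ∈ interior X, ∀ h : E, h ≠ 0 → 0 < affMetric f x h) ∧
  (∀ x ∈ frontier X, Tendsto f (nhdsWithin x (interior X)) atTop) ∧
  (∀ x ∈ interior X, ∀ h : E, |cubicForm f x h| ≤ 2 * γ * (affMetric f x h) ^ ((3:ℝ)/2))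

/-- `σ_x(h) = inf { 1/t : t > 0, x + t•h ∈ X }`. -/
noncomputable def sigmaDist (X : Set E) (x h : E) : ℝ :=
  sInf {r : ℝ | ∃ t : ℝ, 0 < t ∧ x + t • h ∈ X ∧ r = 1/t}

theorem stmt_13 {n : ℕ} (X : Set (EuclideanSpace ℝ (Fin n)))
    (hX : IsRegularConvex X) (γ : ℝ)
    (f : EuclideanSpace ℝ (Fin n) → ℝ) (hf : IsPSCBarrier X f γ)
    (p : EuclideanSpace ℝ (Fin n))
    (hpos : ∀ x ∈ interior X, (0:ℝ) < 1 + inner ℝ x p)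
    (q : EuclideanSpace ℝ (Fin n) → ℝ)
    (hq : q = fun x => f x + Real.log (1 + inner ℝ x p))
    (xs : EuclideanSpace ℝ (Fin n)) (hxs : xs ∈ interior X)
    (hcrit : gradient q xs = 0) :
    (∀ h : EuclideanSpace ℝ (Fin n), h ≠ 0 → 0 < iteratedFDeriv ℝ 2 q xs (fun _ => h)) ∧
    gradient f xs = -(1 + (inner ℝ xs p : ℝ))⁻¹ • p ∧
    p = -(1 + (inner ℝ (gradient f xs) xs : ℝ))⁻¹ • gradient f xs ∧
    1 + (inner ℝ (gradient f xs) xs : ℝ) = (1 + (inner ℝ xs p : ℝ))⁻¹ ∧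
    0 < 1 + (inner ℝ (gradient f xs) xs : ℝ) := by
  let a : EuclideanSpace ℝ (Fin n) → ℝ := fun x => 1 + inner ℝ x p
  have ha_def : a = fun x => 1 + inner ℝ x p := rfl
  have hmem : interior X ∈ nhds xs := isOpen_interior.mem_nhds hxs
  have ha : ∀ x : EuclideanSpace ℝ (Fin n), HasFDerivAt a (innerSL ℝ p) x := by
    intro x
    have : a = fun y => (1:ℝ) + innerSL ℝ p y := by
      funext y; simp [ha_def, real_inner_comm]
    rw [this]
    exact (innerSL ℝ p).hasFDerivAt.const_add 1
  have hc : 0 < a xs := hpos xs hxs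
  have hg : ∀ x ∈ interior X, HasFDerivAt (fun y => Real.log (a y))
      ((a x)⁻¹ • innerSL ℝ p) x := fun x hx => (ha x).log (hpos x hx).ne'
  have hfd : ∀ x ∈ interior X, DifferentiableAt ℝ f x := fun x hx =>
    (hf.1.contDiffAt (isOpen_interior.mem_nhds hx)).differentiableAt (by norm_num)
  have hqd : ∀ x ∈ interior X, HasFDerivAt q
      (fderiv ℝ f x + (a x)⁻¹ • innerSL ℝ p) x := by
    subst hq
    exact fun x hx => ((hfd x hx).hasFDerivAt).add (hg x hx)
  -- gradient of q
  have htd : (InnerProductSpace.toDual ℝ (EuclideanSpace ℝ (Fin n))).symm (innerSL ℝ p) = p := by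
    have h0 : InnerProductSpace.toDual ℝ (EuclideanSpace ℝ (Fin n)) p = innerSL ℝ p := rfl
    rw [← h0, LinearIsometryEquiv.symm_apply_apply]
  have hgradq : gradient q xs = gradient f xs + (a xs)⁻¹ • p := by
    have h1 : HasGradientAt q ((InnerProductSpace.toDual ℝ (EuclideanSpace ℝ (Fin n))).symm
        (fderiv ℝ f xs + (a xs)⁻¹ • innerSL ℝ p)) xs :=
      hasFDerivAt_iff_hasGradientAt.mp (hqd xs hxs)
    rw [h1.gradient, map_add, map_smul, htd]
    rfl
  have hgf : gradient f xs = -(a xs)⁻¹ • p := by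
    rw [hgradq] at hcrit
    have := eq_neg_of_add_eq_zero_left hcrit
    rw [this, neg_smul]
  have hfxs : fderiv ℝ f xs = InnerProductSpace.toDual ℝ (EuclideanSpace ℝ (Fin n)) (gradient f xs) := by
    rw [gradient, (InnerProductSpace.toDual ℝ (EuclideanSpace ℝ (Fin n))).apply_symm_apply]
  have hfderiv : ∀ h : EuclideanSpace ℝ (Fin n), fderiv ℝ f xs h = -(a xs)⁻¹ * inner ℝ p h := by
    intro h
    rw [hfxs, hgf]
    simp [InnerProductSpace.toDual_apply_apply, real_inner_smul_left]
  have hc' : (a xs) ≠ 0 := hc.ne'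
  have hD2g : HasFDerivAt
      (fun x => (a x)⁻¹ • (innerSL ℝ p : EuclideanSpace ℝ (Fin n) →L[ℝ] ℝ))
      (((-(a xs ^ 2)⁻¹) • (innerSL ℝ p : EuclideanSpace ℝ (Fin n) →L[ℝ] ℝ)).smulRight
        (innerSL ℝ p)) xs := by
    have hinv : HasFDerivAt (fun x => (a x)⁻¹)
        ((-(a xs ^ 2)⁻¹) • (innerSL ℝ p : EuclideanSpace ℝ (Fin n) →L[ℝ] ℝ)) xs :=
      (hasDerivAt_inv hc').comp_hasFDerivAt xs (ha xs)
    exact hinv.smul_const (innerSL ℝ p : EuclideanSpace ℝ (Fin n) →L[ℝ] ℝ)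
  have hDf2' : ContDiffAt ℝ 2 (fderiv ℝ f) xs :=
    (hf.1.contDiffAt hmem).fderiv_right (m := 2) (by norm_num)
  have hDf2 : DifferentiableAt ℝ (fderiv ℝ f) xs :=
    hDf2'.differentiableAt (by norm_num)
  have hsum : HasFDerivAt
      (fun x => fderiv ℝ f x + (a x)⁻¹ • (innerSL ℝ p : EuclideanSpace ℝ (Fin n) →L[ℝ] ℝ))
      (fderiv ℝ (fderiv ℝ f) xs + ((-(a xs ^ 2)⁻¹) •
        (innerSL ℝ p : EuclideanSpace ℝ (Fin n) →L[ℝ] ℝ)).smulRight (innerSL ℝ p)) xs :=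
    hDf2.hasFDerivAt.add hD2g
  have heq : fderiv ℝ q =ᶠ[nhds xs]
      fun x => fderiv ℝ f x + (a x)⁻¹ • (innerSL ℝ p : EuclideanSpace ℝ (Fin n) →L[ℝ] ℝ) := by
    filter_upwards [hmem] with x hx
    exact (hqd x hx).fderiv
  have h2q : ∀ h : EuclideanSpace ℝ (Fin n), iteratedFDeriv ℝ 2 q xs (fun _ => h)
      = iteratedFDeriv ℝ 2 f xs (fun _ => h) - (a xs ^ 2)⁻¹ * (inner ℝ p h : ℝ) ^ 2 := by
    intro h
    rw [iteratedFDeriv_two_apply, iteratedFDeriv_two_apply, heq.fderiv_eq, hsum.fderiv]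
    simp only [ContinuousLinearMap.add_apply, ContinuousLinearMap.smulRight_apply,
      ContinuousLinearMap.smul_apply, innerSL_apply_apply, smul_eq_mul, ContinuousLinearMap.coe_smul']
    ring
  have hip : (inner ℝ (gradient f xs) xs : ℝ) = -(a xs)⁻¹ * (inner ℝ xs p : ℝ) := by
    rw [hgf]
    rw [real_inner_smul_left, real_inner_comm]
  have hxp : (inner ℝ xs p : ℝ) = a xs - 1 := by simp [ha_def]
  have h14 : 1 + (inner ℝ (gradient f xs) xs : ℝ) = (a xs)⁻¹ := by
    rw [hip, hxp]; field_simp; ring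
  refine ⟨?_, hgf, ?_, h14, ?_⟩
  · intro h hne
    have hpos2 := hf.2.1 xs hxs h hne
    unfold affMetric at hpos2
    have hfd2 : (fderiv ℝ f xs h)^2 = (a xs ^ 2)⁻¹ * (inner ℝ p h : ℝ) ^ 2 := by
      rw [hfderiv h]
      field_simp
    rw [h2q h, ← hfd2]
    linarith
  · rw [h14, inv_inv, hgf, smul_smul]
    rw [show -(a xs) * (-(a xs)⁻¹) = 1 by field_simp, one_smul]
  · rw [h14]
    positivity
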